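/- Let k ≥ 2 and L ≥ 0 be integers with k^L ≤ ((k−1)/(k+4))·n, let σ_1,…,σ_k be independent uniform random permutations of [n], and fix t ∈ [n]. Define the random sets S_0 = {t}, S_{ℓ+1} = ⋃_{j=1}^{k} σ_j^{−1}(S_ℓ), B_ℓ = ⋃_{h=0}^{ℓ} S_h (with B_{−1} = ∅), and A_ℓ = S_ℓ \ B_{ℓ−1}. Then for every 0 ≤ ℓ ≤ L, E[|A_ℓ|] ≥ k^ℓ / 2. -/

import Mathlib

open scoped Classical

/-- `Sset σ t ℓ` is the set `S_ℓ` of nodes reachable from `t` by tracing exactly `ℓ`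
inverse relation steps: `S_0 = {t}`, `S_{ℓ+1} = ⋃_{j=1}^k σ_j⁻¹(S_ℓ)`. -/
def Sset {n k : ℕ} (σ : Fin k → Equiv.Perm (Fin n)) (t : Fin n) : ℕ → Finset (Fin n)
  | 0 => {t}
  | ℓ + 1 => Finset.univ.biUnion fun j : Fin k => (Sset σ t ℓ).image fun v => (σ j)⁻¹ v

/-- `Bset σ t ℓ = B_ℓ = ⋃_{h=0}^ℓ S_h`, the set of vertices seen up to depth `ℓ`. -/
def Bset {n k : ℕ} (σ : Fin k → Equiv.Perm (Fin n)) (t : Fin n) (ℓ : ℕ) : Finset (Fin n) :=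
  (Finset.range (ℓ + 1)).biUnion (Sset σ t)

/-- `Aset σ t ℓ = A_ℓ = S_ℓ \ B_{ℓ−1}`, the vertices first seen at depth `ℓ`
(with `B_{−1} = ∅`, so `A_0 = S_0`). -/
def Aset {n k : ℕ} (σ : Fin k → Equiv.Perm (Fin n)) (t : Fin n) : ℕ → Finset (Fin n)
  | 0 => Sset σ t 0
  | ℓ + 1 => Sset σ t (ℓ + 1) \ Bset σ t ℓ

namespace Stmt4Aux

open Finset Equiv

section unionbound
variable {α ι : Type*} [DecidableEq α] [Fintype ι] [DecidableEq ι]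

lemma union_lower_aux (X : ι → Finset α) (s : Finset ι) :
    (∑ i ∈ s, ((X i).card : ℝ))
      - (1/2) * ∑ i ∈ s, ∑ i' ∈ s, (if i = i' then (0:ℝ) else ((X i ∩ X i').card : ℝ))
      ≤ ((s.biUnion X).card : ℝ) := by
  classical
  induction s using Finset.induction_on with
  | empty => simp
  | @insert a s ha ih =>
    set U := s.biUnion X with hU
    have hbu : (insert a s).biUnion X = X a ∪ U := Finset.biUnion_insert
    have hcu : ((X a ∪ U).card : ℝ) = (X a).card + (U.card : ℝ) - ((X a ∩ U).card : ℝ) := by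
      have h := Finset.card_union_add_card_inter (X a) U
      have h' : (((X a ∪ U).card : ℝ) + ((X a ∩ U).card : ℝ)) = ((X a).card : ℝ) + (U.card : ℝ) := by
        exact_mod_cast congrArg (fun m : ℕ => (m : ℝ)) h
      linarith
    have hD : ((X a ∩ U).card : ℝ) ≤ ∑ i ∈ s, ((X a ∩ X i).card : ℝ) := by
      have hsub : X a ∩ U ⊆ s.biUnion (fun i => X a ∩ X i) := by
        intro x hx
        rcases Finset.mem_inter.1 hx with ⟨hx1, hx2⟩
        rcases Finset.mem_biUnion.1 hx2 with ⟨i, hi, hxi⟩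
        exact Finset.mem_biUnion.2 ⟨i, hi, Finset.mem_inter.2 ⟨hx1, hxi⟩⟩
      calc ((X a ∩ U).card : ℝ) ≤ ((s.biUnion (fun i => X a ∩ X i)).card : ℝ) := by
            exact_mod_cast Finset.card_le_card hsub
        _ ≤ ∑ i ∈ s, ((X a ∩ X i).card : ℝ) := by
            exact_mod_cast Finset.card_biUnion_le
    have hsum1 : ∑ i ∈ insert a s, ((X i).card : ℝ)
        = (X a).card + ∑ i ∈ s, ((X i).card : ℝ) := Finset.sum_insert ha
    have hpair : ∑ i ∈ insert a s, ∑ i' ∈ insert a s,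
          (if i = i' then (0:ℝ) else ((X i ∩ X i').card : ℝ))
        = (∑ i ∈ s, ∑ i' ∈ s, (if i = i' then (0:ℝ) else ((X i ∩ X i').card : ℝ)))
          + 2 * ∑ i ∈ s, ((X a ∩ X i).card : ℝ) := by
      rw [Finset.sum_insert ha]
      have h1 : ∑ i' ∈ insert a s, (if a = i' then (0:ℝ) else ((X a ∩ X i').card : ℝ))
          = ∑ i ∈ s, ((X a ∩ X i).card : ℝ) := by
        rw [Finset.sum_insert ha, if_pos rfl]
        rw [zero_add]
        refine Finset.sum_congr rfl fun i hi => ?_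
        rw [if_neg (by rintro rfl; exact ha hi)]
      have h2 : ∀ i ∈ s, ∑ i' ∈ insert a s,
            (if i = i' then (0:ℝ) else ((X i ∩ X i').card : ℝ))
          = ((X a ∩ X i).card : ℝ)
            + ∑ i' ∈ s, (if i = i' then (0:ℝ) else ((X i ∩ X i').card : ℝ)) := by
        intro i hi
        rw [Finset.sum_insert ha, if_neg (by rintro rfl; exact ha hi), Finset.inter_comm]
      rw [h1, Finset.sum_congr rfl h2, Finset.sum_add_distrib]
      ring
    rw [hbu, hsum1, hpair, hcu]
    have := ih
    linarith

lemma union_lower (X : ι → Finset α) (B : Finset α) :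
    (∑ i, ((X i).card : ℝ)) - (∑ i, ((X i ∩ B).card : ℝ))
      - (1/2) * ∑ i, ∑ i', (if i = i' then (0:ℝ) else ((X i ∩ X i').card : ℝ))
      ≤ ((Finset.univ.biUnion X \ B).card : ℝ) := by
  classical
  set U := Finset.univ.biUnion X with hU
  have h1 : ((U \ B).card : ℝ) = (U.card : ℝ) - ((U ∩ B).card : ℝ) := by
    have h2 : (U ∩ B).card + (U \ B).card = U.card := by
      rw [add_comm]
      exact Finset.card_sdiff_add_card_inter U B
    have h2' : (((U ∩ B).card : ℝ) + ((U \ B).card : ℝ)) = (U.card : ℝ) := by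
      exact_mod_cast congrArg (fun m : ℕ => (m : ℝ)) h2
    linarith
  have h3 : ((U ∩ B).card : ℝ) ≤ ∑ i, ((X i ∩ B).card : ℝ) := by
    have hsub : U ∩ B ⊆ Finset.univ.biUnion (fun i => X i ∩ B) := by
      intro x hx
      rcases Finset.mem_inter.1 hx with ⟨hx1, hx2⟩
      rcases Finset.mem_biUnion.1 hx1 with ⟨i, hi, hxi⟩
      exact Finset.mem_biUnion.2 ⟨i, hi, Finset.mem_inter.2 ⟨hxi, hx2⟩⟩
    calc ((U ∩ B).card : ℝ) ≤ ((Finset.univ.biUnion (fun i => X i ∩ B)).card : ℝ) := by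
          exact_mod_cast Finset.card_le_card hsub
      _ ≤ ∑ i, ((X i ∩ B).card : ℝ) := by exact_mod_cast Finset.card_biUnion_le
  have h4 := union_lower_aux X (Finset.univ : Finset ι)
  rw [h1]
  linarith

end unionbound

variable {n k : ℕ}



open Finset Equiv

variable {n k : ℕ}

/-- `Prev σ t ℓ = B_{ℓ-1}` (with `B_{-1} = ∅`). -/
def Prev (σ : Fin k → Equiv.Perm (Fin n)) (t : Fin n) : ℕ → Finset (Fin n)
  | 0 => ∅
  | ℓ + 1 => Bset σ t ℓ

lemma Aset_eq (σ : Fin k → Equiv.Perm (Fin n)) (t : Fin n) (ℓ : ℕ) :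
    Aset σ t ℓ = Sset σ t ℓ \ Prev σ t ℓ := by
  cases ℓ with
  | zero => simp [Aset, Prev]
  | succ m => rfl

lemma Aset_subset_Sset (σ : Fin k → Equiv.Perm (Fin n)) (t : Fin n) (ℓ : ℕ) :
    Aset σ t ℓ ⊆ Sset σ t ℓ := by
  rw [Aset_eq]; exact Finset.sdiff_subset

lemma Aset_disj_Prev (σ : Fin k → Equiv.Perm (Fin n)) (t : Fin n) (ℓ : ℕ) :
    ∀ v ∈ Aset σ t ℓ, v ∉ Prev σ t ℓ := by
  intro v hv
  rw [Aset_eq] at hv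
  exact (Finset.mem_sdiff.1 hv).2

lemma card_Sset_le (σ : Fin k → Equiv.Perm (Fin n)) (t : Fin n) :
    ∀ ℓ, (Sset σ t ℓ).card ≤ k ^ ℓ := by
  intro ℓ
  induction ℓ with
  | zero => simp [Sset]
  | succ m ih =>
    calc (Sset σ t (m+1)).card
        ≤ ∑ j : Fin k, ((Sset σ t m).image fun v => (σ j)⁻¹ v).card :=
          Finset.card_biUnion_le
      _ ≤ ∑ _j : Fin k, k ^ m := by
          refine Finset.sum_le_sum fun j _ => ?_
          exact le_trans Finset.card_image_le ih
      _ = k ^ (m+1) := by simp [Finset.sum_const, pow_succ, mul_comm]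

lemma card_Aset_le (σ : Fin k → Equiv.Perm (Fin n)) (t : Fin n) (ℓ : ℕ) :
    (Aset σ t ℓ).card ≤ k ^ ℓ :=
  le_trans (Finset.card_le_card (Aset_subset_Sset σ t ℓ)) (card_Sset_le σ t ℓ)

lemma card_Bset_le (σ : Fin k → Equiv.Perm (Fin n)) (t : Fin n) (ℓ : ℕ) :
    (Bset σ t ℓ).card ≤ ∑ h ∈ Finset.range (ℓ+1), k ^ h :=
  le_trans Finset.card_biUnion_le (Finset.sum_le_sum fun h _ => card_Sset_le σ t h)

lemma card_Prev_le (σ : Fin k → Equiv.Perm (Fin n)) (t : Fin n) (ℓ : ℕ) :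
    (Prev σ t ℓ).card ≤ ∑ h ∈ Finset.range ℓ, k ^ h := by
  cases ℓ with
  | zero => simp [Prev]
  | succ m => exact card_Bset_le σ t m

lemma card_Aset_zero (σ : Fin k → Equiv.Perm (Fin n)) (t : Fin n) :
    (Aset σ t 0).card = 1 := by
  simp [Aset, Sset]

lemma Sset_subset_Prev (σ : Fin k → Equiv.Perm (Fin n)) (t : Fin n) {h ℓ : ℕ} (hh : h < ℓ) :
    Sset σ t h ⊆ Prev σ t ℓ := by
  obtain ⟨m, rfl⟩ : ∃ m, ℓ = m + 1 := ⟨ℓ - 1, by omega⟩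
  intro x hx
  exact Finset.mem_biUnion.2 ⟨h, Finset.mem_range.2 (by omega), hx⟩

lemma fix_inv {π : Equiv.Perm (Fin n)} {x : Fin n} (h : π x = x) : π⁻¹ x = x := by
  conv_lhs => rw [← h]; exact π.symm_apply_apply x

section upd

variable (σ : Fin k → Equiv.Perm (Fin n)) (t : Fin n) (j : Fin k) (π : Equiv.Perm (Fin n))
  (ℓ : ℕ)

lemma Sset_update (hπ : ∀ x ∈ (Prev σ t ℓ).image ⇑(σ j)⁻¹, π x = x) : ∀ h ≤ ℓ, Sset (Function.update σ j (σ j * π)) t h = Sset σ t h := by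
  intro h hh
  induction h with
  | zero => rfl
  | succ m ih =>
    show Finset.univ.biUnion _ = Finset.univ.biUnion _
    rw [ih (by omega)]
    refine Finset.biUnion_congr rfl fun i _ => ?_
    rcases eq_or_ne i j with rfl | hij
    · refine Finset.image_congr fun v hv => ?_
      have hv' : (σ i)⁻¹ v ∈ (Prev σ t ℓ).image ⇑(σ i)⁻¹ :=
        Finset.mem_image_of_mem _ (Sset_subset_Prev σ t (by omega) hv)
      have : π⁻¹ ((σ i)⁻¹ v) = (σ i)⁻¹ v := fix_inv (hπ _ hv')
      simp only [Function.update_self, mul_inv_rev, Equiv.Perm.mul_apply, this]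
    · rw [Function.update_of_ne hij]

lemma Bset_update (hπ : ∀ x ∈ (Prev σ t ℓ).image ⇑(σ j)⁻¹, π x = x) : ∀ h ≤ ℓ, Bset (Function.update σ j (σ j * π)) t h = Bset σ t h := by
  intro h hh
  unfold Bset
  refine Finset.biUnion_congr rfl fun g hg => ?_
  exact Sset_update σ t j π ℓ hπ g (by simp only [Finset.mem_range] at hg; omega)

lemma Prev_update (hπ : ∀ x ∈ (Prev σ t ℓ).image ⇑(σ j)⁻¹, π x = x) :
    Prev (Function.update σ j (σ j * π)) t ℓ = Prev σ t ℓ := by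
  cases ℓ with
  | zero => rfl
  | succ m => exact Bset_update σ t j π (m+1) hπ m (by omega)

lemma Aset_update (hπ : ∀ x ∈ (Prev σ t ℓ).image ⇑(σ j)⁻¹, π x = x) :
    Aset (Function.update σ j (σ j * π)) t ℓ = Aset σ t ℓ := by
  rw [Aset_eq, Aset_eq, Sset_update σ t j π ℓ hπ ℓ le_rfl, Prev_update σ t j π ℓ hπ]

end upd


lemma stab_card_le (s : Finset (Fin n)) :
    (Finset.univ.filter fun π : Equiv.Perm (Fin n) => ∀ x ∈ s, π x = x).card
      ≤ (n - s.card).factorial := by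
  classical
  set p : Fin n → Prop := fun x => x ∉ s with hp
  have key : ∀ π : Equiv.Perm (Fin n), (∀ x ∈ s, π x = x) → ∀ x, p x ↔ p (π x) := by
    intro π h x
    constructor
    · intro hx hπx
      have : π (π x) = π x := h _ hπx
      have : π x = x := π.injective this
      exact hx (this ▸ hπx)
    · intro hx
      intro hxs
      exact hx (by rw [h x hxs]; exact hxs)
  set f : Equiv.Perm (Fin n) → Equiv.Perm (Subtype p) := fun π =>
    if h : ∀ x ∈ s, π x = x then π.subtypePerm (fun x => (key π h x).symm) else 1 with hf
  have : (Finset.univ.filter fun π : Equiv.Perm (Fin n) => ∀ x ∈ s, π x = x).card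
      ≤ (Finset.univ : Finset (Equiv.Perm (Subtype p))).card := by
    refine Finset.card_le_card_of_injOn f (fun _ _ => Finset.mem_univ _) ?_
    intro π hπ π' hπ' hff
    simp only [Finset.mem_coe, Finset.mem_filter] at hπ hπ'
    rw [hf] at hff
    simp only [dif_pos hπ.2, dif_pos hπ'.2] at hff
    ext x
    by_cases hx : x ∈ s
    · rw [hπ.2 x hx, hπ'.2 x hx]
    · have h' := congrArg (fun g : Equiv.Perm (Subtype p) => (g ⟨x, hx⟩ : Subtype p).1) hff
      have h'' : π x = π' x := by simpa [Equiv.Perm.subtypePerm_apply] using h'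
      exact congrArg Fin.val h''
  refine this.trans ?_
  rw [Finset.card_univ, Fintype.card_perm]
  have : Fintype.card (Subtype p) = n - s.card := by
    have := Fintype.card_subtype_compl (fun x : Fin n => x ∈ s)
    simpa [p, Fintype.card_coe] using this
  rw [this]

lemma le_stab_card (s : Finset (Fin n)) :
    (n - s.card).factorial
      ≤ (Finset.univ.filter fun π : Equiv.Perm (Fin n) => ∀ x ∈ s, π x = x).card := by
  classical
  set p : Fin n → Prop := fun x => x ∉ s with hp
  have hcard : Fintype.card (Subtype p) = n - s.card := by
    have := Fintype.card_subtype_compl (fun x : Fin n => x ∈ s)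
    simpa [p, Fintype.card_coe] using this
  have : (Finset.univ : Finset (Equiv.Perm (Subtype p))).card
      ≤ (Finset.univ.filter fun π : Equiv.Perm (Fin n) => ∀ x ∈ s, π x = x).card := by
    refine Finset.card_le_card_of_injOn (fun f => Equiv.Perm.ofSubtype f) ?_ ?_
    · intro f _
      simp only [Finset.mem_coe, Finset.mem_filter]
      refine ⟨Finset.mem_univ _, fun x hx => ?_⟩
      exact Equiv.Perm.ofSubtype_apply_of_not_mem f (by simp [p, hx])
    · intro f _ g _ hfg
      have key : ∀ x : Subtype p, (f x : Fin n) = (g x : Fin n) := by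
        intro x
        rw [← Equiv.Perm.ofSubtype_apply_of_mem f x.2,
          ← Equiv.Perm.ofSubtype_apply_of_mem g x.2]
        exact congrFun (congrArg _ hfg) (x : Fin n)
      exact Equiv.ext fun x => Subtype.ext (key x)
  calc (n - s.card).factorial = (Finset.univ : Finset (Equiv.Perm (Subtype p))).card := by
        rw [Finset.card_univ, Fintype.card_perm, hcard]
    _ ≤ _ := this

lemma stab_move_card_le (s : Finset (Fin n)) (y u : Fin n) (hu : u ∉ s) :
    (Finset.univ.filter fun π : Equiv.Perm (Fin n) => (∀ x ∈ s, π x = x) ∧ π y = u).card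
      ≤ (n - s.card - 1).factorial := by
  classical
  by_cases hy : y ∈ s
  · have : (Finset.univ.filter
        fun π : Equiv.Perm (Fin n) => (∀ x ∈ s, π x = x) ∧ π y = u) = ∅ := by
      refine Finset.filter_eq_empty_iff.2 fun π _ => ?_
      rintro ⟨h1, h2⟩
      have : u = y := by rw [← h2, h1 y hy]
      exact hu (this ▸ hy)
    simp [this]
  · rcases Finset.eq_empty_or_nonempty (Finset.univ.filter
        fun π : Equiv.Perm (Fin n) => (∀ x ∈ s, π x = x) ∧ π y = u) with he | ⟨τ₀, hτ₀⟩
    · simp [he]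
    · simp only [Finset.mem_filter] at hτ₀
      obtain ⟨-, hτs, hτy⟩ := hτ₀
      have step : (Finset.univ.filter
          fun π : Equiv.Perm (Fin n) => (∀ x ∈ s, π x = x) ∧ π y = u).card
          ≤ (Finset.univ.filter
            fun ρ : Equiv.Perm (Fin n) => ∀ x ∈ insert y s, ρ x = x).card := by
        refine Finset.card_le_card_of_injOn (fun π => τ₀⁻¹ * π) ?_ ?_
        · intro π hπ
          simp only [Finset.mem_coe, Finset.mem_filter] at hπ ⊢
          obtain ⟨-, hs, hy'⟩ := hπ
          refine ⟨Finset.mem_univ _, fun x hx => ?_⟩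
          rcases Finset.mem_insert.1 hx with rfl | hx
          · show τ₀⁻¹ (π x) = x
            rw [hy']
            conv_lhs => rw [← hτy]
            exact τ₀.symm_apply_apply x
          · show τ₀⁻¹ (π x) = x
            rw [hs x hx]
            conv_lhs => rw [← hτs x hx]
            exact τ₀.symm_apply_apply x
        · intro a _ b _ hab
          exact mul_left_cancel hab
      refine step.trans ?_
      have := stab_card_le (n := n) (insert y s)
      rwa [Finset.card_insert_of_notMem hy, ← Nat.sub_sub] at this

lemma inter_image_card (φ : Fin n → Fin n) (hφ : Function.Injective φ)
    (s T : Finset (Fin n)) :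
    (s.image φ ∩ T).card = (s.filter fun v => φ v ∈ T).card := by
  have : s.image φ ∩ T = (s.filter fun v => φ v ∈ T).image φ := by
    ext z
    simp only [Finset.mem_inter, Finset.mem_image, Finset.mem_filter]
    constructor
    · rintro ⟨⟨v, hv, rfl⟩, hz⟩
      exact ⟨v, ⟨hv, hz⟩, rfl⟩
    · rintro ⟨v, ⟨hv, hz⟩, rfl⟩
      exact ⟨⟨v, hv, rfl⟩, hz⟩
  rw [this, Finset.card_image_of_injective _ hφ]

lemma core (j : Fin k) (A T P : (Fin k → Equiv.Perm (Fin n)) → Finset (Fin n))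
    (hAP : ∀ σ, ∀ v ∈ A σ, v ∉ P σ)
    (hinvA : ∀ σ π, (∀ x ∈ (P σ).image ⇑(σ j)⁻¹, π x = x) →
        A (Function.update σ j (σ j * π)) = A σ)
    (hinvT : ∀ σ π, (∀ x ∈ (P σ).image ⇑(σ j)⁻¹, π x = x) →
        T (Function.update σ j (σ j * π)) = T σ)
    (hinvP : ∀ σ π, (∀ x ∈ (P σ).image ⇑(σ j)⁻¹, π x = x) →
        P (Function.update σ j (σ j * π)) = P σ)
    (hPn : ∀ σ, (P σ).card < n) :
    ∑ σ : Fin k → Equiv.Perm (Fin n),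
        ((n : ℝ) - (P σ).card) * (((A σ).image ⇑(σ j)⁻¹ ∩ T σ).card : ℝ)
      ≤ ∑ σ : Fin k → Equiv.Perm (Fin n), ((A σ).card : ℝ) * ((T σ).card : ℝ) := by
  classical
  set R : (Fin k → Equiv.Perm (Fin n)) → Finset (Fin n) :=
    fun σ => (P σ).image ⇑(σ j)⁻¹ with hR
  set pred : (Fin k → Equiv.Perm (Fin n)) → Equiv.Perm (Fin n) → Prop :=
    fun σ π => ∀ x ∈ R σ, π x = x with hpred
  set G : (Fin k → Equiv.Perm (Fin n)) → Finset (Equiv.Perm (Fin n)) :=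
    fun σ => Finset.univ.filter (pred σ) with hG
  set upd : (Fin k → Equiv.Perm (Fin n)) → Equiv.Perm (Fin n) → (Fin k → Equiv.Perm (Fin n)) :=
    fun σ π => Function.update σ j (σ j * π) with hupd
  set m : (Fin k → Equiv.Perm (Fin n)) → ℕ := fun σ => n - (P σ).card with hm
  have hm1 : ∀ σ, 1 ≤ m σ := fun σ => by have := hPn σ; simp only [hm]; omega
  have cardR : ∀ σ, (R σ).card = (P σ).card := fun σ =>
    Finset.card_image_of_injective _ (Equiv.injective _)
  -- inverse fixes
  have predinv : ∀ σ π, pred σ π → pred σ π⁻¹ := by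
    intro σ π h x hx
    exact fix_inv (h x hx)
  -- update formulas
  have updj : ∀ σ π, (upd σ π) j = σ j * π := fun σ π => Function.update_self _ _ _
  -- transfer
  have transfer_fwd : ∀ σ π, pred σ π → pred (upd σ π) π := by
    intro σ π h
    have hPu : P (upd σ π) = P σ := hinvP σ π h
    have hRu : R (upd σ π) = R σ := by
      simp only [hR, hPu, updj]
      have hcomp : ⇑(σ j * π)⁻¹ = ⇑π⁻¹ ∘ ⇑(σ j)⁻¹ := by
        ext x; simp [Equiv.Perm.mul_apply]
      rw [hcomp, ← Finset.image_image]
      refine Finset.image_congr (fun x hx => fix_inv (h x hx)) |>.trans Finset.image_id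
    intro x hx
    rw [hRu] at hx
    exact h x hx
  have hback : ∀ σ π, upd (upd σ π) π⁻¹ = σ := by
    intro σ π
    show Function.update (upd σ π) j ((upd σ π) j * π⁻¹) = σ
    rw [updj σ π, mul_inv_cancel_right]
    show Function.update (Function.update σ j (σ j * π)) j (σ j) = σ
    rw [Function.update_idem, Function.update_eq_self]
  have transfer : ∀ σ π, pred σ π ↔ pred (upd σ π) π := by
    intro σ π
    constructor
    · exact transfer_fwd σ π
    · intro h
      have h1 : pred (upd σ π) π⁻¹ := predinv _ _ h
      have h2 : pred (upd (upd σ π) π⁻¹) π⁻¹ := transfer_fwd _ _ h1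
      rw [hback σ π] at h2
      have h3 : pred σ π⁻¹⁻¹ := predinv _ _ h2
      rwa [inv_inv] at h3
  -- the equivalence used for reindexing
  let e : ((Fin k → Equiv.Perm (Fin n)) × Equiv.Perm (Fin n))
      ≃ ((Fin k → Equiv.Perm (Fin n)) × Equiv.Perm (Fin n)) :=
  { toFun := fun p => (upd p.1 p.2, p.2)
    invFun := fun p => (Function.update p.1 j (p.1 j * p.2⁻¹), p.2)
    left_inv := by
      rintro ⟨σ, π⟩
      simp only [hupd, Function.update_self, Function.update_idem, mul_inv_cancel_right,
        Function.update_eq_self]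
    right_inv := by
      rintro ⟨σ, π⟩
      simp only [hupd, Function.update_self, Function.update_idem, inv_mul_cancel_right,
        Function.update_eq_self] }
  have reindex : ∀ Φ : (Fin k → Equiv.Perm (Fin n)) → ℝ,
      ∑ σ : Fin k → Equiv.Perm (Fin n), ∑ π ∈ G σ, Φ (upd σ π)
        = ∑ σ : Fin k → Equiv.Perm (Fin n), ((G σ).card : ℝ) * Φ σ := by
    intro Φ
    have step1 : ∀ σ, ∑ π ∈ G σ, Φ (upd σ π)
        = ∑ π : Equiv.Perm (Fin n), if pred σ π then Φ (upd σ π) else 0 := by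
      intro σ
      rw [hG, Finset.sum_filter]
    have step2 : ∑ p : (Fin k → Equiv.Perm (Fin n)) × Equiv.Perm (Fin n),
          (if pred p.1 p.2 then Φ (upd p.1 p.2) else 0)
        = ∑ p : (Fin k → Equiv.Perm (Fin n)) × Equiv.Perm (Fin n),
          (if pred p.1 p.2 then Φ p.1 else 0) := by
      refine Fintype.sum_equiv e _ _ ?_
      rintro ⟨σ, π⟩
      show (if pred σ π then Φ (upd σ π) else 0) = (if pred (upd σ π) π then Φ (upd σ π) else 0)
      exact if_congr (transfer σ π) rfl rfl
    calc ∑ σ : Fin k → Equiv.Perm (Fin n), ∑ π ∈ G σ, Φ (upd σ π)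
        = ∑ p : (Fin k → Equiv.Perm (Fin n)) × Equiv.Perm (Fin n),
            (if pred p.1 p.2 then Φ (upd p.1 p.2) else 0) := by
          rw [Fintype.sum_prod_type]
          exact Finset.sum_congr rfl fun σ _ => step1 σ
      _ = ∑ p : (Fin k → Equiv.Perm (Fin n)) × Equiv.Perm (Fin n),
            (if pred p.1 p.2 then Φ p.1 else 0) := step2
      _ = ∑ σ : Fin k → Equiv.Perm (Fin n), ((G σ).card : ℝ) * Φ σ := by
          rw [Fintype.sum_prod_type]
          refine Finset.sum_congr rfl fun σ _ => ?_
          rw [← Finset.sum_filter]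
          simp [hG, Finset.sum_const, nsmul_eq_mul]
  -- the two main per-σ estimates
  set F : (Fin k → Equiv.Perm (Fin n)) → ℝ :=
    fun σ => (((A σ).image ⇑(σ j)⁻¹ ∩ T σ).card : ℝ) with hF
  set w : (Fin k → Equiv.Perm (Fin n)) → ℝ :=
    fun σ => (((m σ - 1).factorial : ℝ))⁻¹ with hw
  have hwpos : ∀ σ, 0 < w σ := fun σ => by
    simp only [hw]
    exact inv_pos.2 (by exact_mod_cast Nat.factorial_pos _)
  have hFnn : ∀ σ, 0 ≤ F σ := fun σ => by positivity
  have stepC : ∀ σ, ((m σ).factorial : ℝ) ≤ ((G σ).card : ℝ) := by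
    intro σ
    have := le_stab_card (R σ)
    rw [cardR σ] at this
    exact_mod_cast this
  have stepD : ∀ σ, (∑ π ∈ G σ, F (upd σ π))
      ≤ ((A σ).card : ℝ) * ((T σ).card : ℝ) * ((m σ - 1).factorial : ℝ) := by
    intro σ
    have hFeq : ∀ π ∈ G σ, F (upd σ π)
        = (((A σ).image ⇑(σ j * π)⁻¹ ∩ T σ).card : ℝ) := by
      intro π hπ
      have hπ' : pred σ π := (Finset.mem_filter.1 hπ).2
      simp only [hF, hinvA σ π hπ', hinvT σ π hπ', updj]
      rw [show A (upd σ π) = A σ from hinvA σ π hπ', show T (upd σ π) = T σ from hinvT σ π hπ']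
    rw [Finset.sum_congr rfl hFeq]
    have natbound : (∑ π ∈ G σ, (((A σ).image ⇑(σ j * π)⁻¹ ∩ T σ).card))
        ≤ (A σ).card * ((T σ).card * (m σ - 1).factorial) := by
      have e1 : ∀ π ∈ G σ, ((A σ).image ⇑(σ j * π)⁻¹ ∩ T σ).card
          = ((A σ).filter fun v => (σ j * π)⁻¹ v ∈ T σ).card := fun π _ =>
        inter_image_card _ (Equiv.injective _) _ _
      rw [Finset.sum_congr rfl e1]
      have e2 : ∀ π ∈ G σ, ((A σ).filter fun v => (σ j * π)⁻¹ v ∈ T σ).card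
          = ∑ v ∈ A σ, if (σ j * π)⁻¹ v ∈ T σ then 1 else 0 := fun π _ =>
        Finset.card_filter _ _
      rw [Finset.sum_congr rfl e2, Finset.sum_comm]
      have perv : ∀ v ∈ A σ, (∑ π ∈ G σ, if (σ j * π)⁻¹ v ∈ T σ then 1 else 0)
          ≤ (T σ).card * (m σ - 1).factorial := by
        intro v hv
        rw [← Finset.card_filter]
        have hv' : (σ j)⁻¹ v ∉ R σ := by
          intro hmem
          simp only [hR, Finset.mem_image] at hmem
          obtain ⟨ww, hw1, hw2⟩ := hmem
          have : ww = v := (Equiv.injective _) hw2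
          exact hAP σ v hv (this ▸ hw1)
        have hsub : (G σ).filter (fun π => (σ j * π)⁻¹ v ∈ T σ)
            ⊆ (T σ).biUnion (fun y => (G σ).filter fun π => π y = (σ j)⁻¹ v) := by
          intro π hπ
          rcases Finset.mem_filter.1 hπ with ⟨hπG, hπT⟩
          have : (σ j * π)⁻¹ v = π⁻¹ ((σ j)⁻¹ v) := by
            simp [Equiv.Perm.mul_apply]
          refine Finset.mem_biUnion.2 ⟨π⁻¹ ((σ j)⁻¹ v), this ▸ hπT, ?_⟩
          refine Finset.mem_filter.2 ⟨hπG, ?_⟩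
          exact π.apply_symm_apply _
        refine le_trans (Finset.card_le_card hsub) ?_
        refine le_trans Finset.card_biUnion_le ?_
        have hy : ∀ y ∈ T σ, ((G σ).filter fun π => π y = (σ j)⁻¹ v).card
            ≤ (m σ - 1).factorial := by
          intro y _
          have hsub2 : (G σ).filter (fun π => π y = (σ j)⁻¹ v)
              ⊆ Finset.univ.filter (fun π : Equiv.Perm (Fin n) =>
                  (∀ x ∈ R σ, π x = x) ∧ π y = (σ j)⁻¹ v) := by
            intro π hπ
            rcases Finset.mem_filter.1 hπ with ⟨hπG, hπy⟩
            exact Finset.mem_filter.2 ⟨Finset.mem_univ _,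
              (Finset.mem_filter.1 hπG).2, hπy⟩
          refine le_trans (Finset.card_le_card hsub2) ?_
          have := stab_move_card_le (R σ) y ((σ j)⁻¹ v) hv'
          rwa [cardR σ] at this
        calc (∑ y ∈ T σ, ((G σ).filter fun π => π y = (σ j)⁻¹ v).card)
            ≤ ∑ _y ∈ T σ, (m σ - 1).factorial := Finset.sum_le_sum hy
          _ = (T σ).card * (m σ - 1).factorial := by
              rw [Finset.sum_const, smul_eq_mul]
      refine le_trans (Finset.sum_le_sum perv) ?_
      rw [Finset.sum_const, smul_eq_mul]
    calc (∑ π ∈ G σ, (((A σ).image ⇑(σ j * π)⁻¹ ∩ T σ).card : ℝ))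
        = ((∑ π ∈ G σ, ((A σ).image ⇑(σ j * π)⁻¹ ∩ T σ).card : ℕ) : ℝ) := by
          push_cast; ring_nf
      _ ≤ (((A σ).card * ((T σ).card * (m σ - 1).factorial) : ℕ) : ℝ) := by
          exact_mod_cast natbound
      _ = ((A σ).card : ℝ) * ((T σ).card : ℝ) * ((m σ - 1).factorial : ℝ) := by
          push_cast; ring
  -- assemble
  have hcast : ∀ σ, ((n : ℝ) - (P σ).card) = ((m σ : ℕ) : ℝ) := by
    intro σ
    simp only [hm]
    rw [Nat.cast_sub (hPn σ).le]
  have hfact : ∀ σ, ((m σ : ℕ) : ℝ) = ((m σ).factorial : ℝ) * w σ := by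
    intro σ
    have h1 : m σ = (m σ - 1) + 1 := by have := hm1 σ; omega
    have h2 : (m σ).factorial = (m σ) * (m σ - 1).factorial := by
      conv_lhs => rw [h1]
      rw [Nat.factorial_succ, ← h1]
    rw [hw]
    simp only
    rw [h2]
    push_cast
    rw [mul_assoc, mul_inv_cancel₀ (by exact_mod_cast (Nat.factorial_pos (m σ - 1)).ne'), mul_one]
  calc ∑ σ : Fin k → Equiv.Perm (Fin n), ((n : ℝ) - (P σ).card)
          * (((A σ).image ⇑(σ j)⁻¹ ∩ T σ).card : ℝ)
      = ∑ σ : Fin k → Equiv.Perm (Fin n), ((m σ).factorial : ℝ) * (w σ * F σ) := by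
        refine Finset.sum_congr rfl fun σ _ => ?_
        rw [hcast σ, hfact σ]
        ring
    _ ≤ ∑ σ : Fin k → Equiv.Perm (Fin n), ((G σ).card : ℝ) * (w σ * F σ) := by
        refine Finset.sum_le_sum fun σ _ => ?_
        exact mul_le_mul_of_nonneg_right (stepC σ)
          (mul_nonneg (hwpos σ).le (hFnn σ))
    _ = ∑ σ : Fin k → Equiv.Perm (Fin n), ∑ π ∈ G σ, (w (upd σ π) * F (upd σ π)) := by
        rw [reindex (fun τ => w τ * F τ)]
    _ = ∑ σ : Fin k → Equiv.Perm (Fin n), w σ * ∑ π ∈ G σ, F (upd σ π) := by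
        refine Finset.sum_congr rfl fun σ _ => ?_
        rw [Finset.mul_sum]
        refine Finset.sum_congr rfl fun π hπ => ?_
        have hπ' : pred σ π := (Finset.mem_filter.1 hπ).2
        have : w (upd σ π) = w σ := by
          simp only [hw, hm, hinvP σ π hπ']
          rw [show P (upd σ π) = P σ from hinvP σ π hπ']
        rw [this]
    _ ≤ ∑ σ : Fin k → Equiv.Perm (Fin n),
          w σ * (((A σ).card : ℝ) * ((T σ).card : ℝ) * ((m σ - 1).factorial : ℝ)) := by
        refine Finset.sum_le_sum fun σ _ => ?_
        exact mul_le_mul_of_nonneg_left (stepD σ) (hwpos σ).le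
    _ = ∑ σ : Fin k → Equiv.Perm (Fin n), ((A σ).card : ℝ) * ((T σ).card : ℝ) := by
        refine Finset.sum_congr rfl fun σ _ => ?_
        rw [hw]
        simp only
        rw [mul_comm (((m σ - 1).factorial : ℝ))⁻¹ _, mul_assoc,
          mul_inv_cancel₀ (by exact_mod_cast (Nat.factorial_pos (m σ - 1)).ne'), mul_one]

lemma step (t : Fin n) (ℓ : ℕ) (m₀ : ℝ) (hm₀pos : 0 < m₀)
    (hm₀ : ∀ σ : Fin k → Equiv.Perm (Fin n), m₀ ≤ (n : ℝ) - ((Prev σ t ℓ).card : ℝ)) :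
    (k : ℝ) * (∑ σ : Fin k → Equiv.Perm (Fin n), ((Aset σ t ℓ).card : ℝ))
      - ((k : ℝ) * (∑ σ : Fin k → Equiv.Perm (Fin n),
            ((Aset σ t ℓ).card : ℝ) * ((Bset σ t ℓ).card : ℝ))
          + ((k : ℝ) * ((k : ℝ) - 1) / 2) * (∑ σ : Fin k → Equiv.Perm (Fin n),
            ((Aset σ t ℓ).card : ℝ) * ((Aset σ t ℓ).card : ℝ))) / m₀
      ≤ ∑ σ : Fin k → Equiv.Perm (Fin n), ((Aset σ t (ℓ+1)).card : ℝ) := by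
  classical
  set X : (Fin k → Equiv.Perm (Fin n)) → Fin k → Finset (Fin n) :=
    fun σ j => (Aset σ t ℓ).image ⇑(σ j)⁻¹ with hX
  have hPn : ∀ σ : Fin k → Equiv.Perm (Fin n), (Prev σ t ℓ).card < n := by
    intro σ
    have h1 := hm₀ σ
    have : ((Prev σ t ℓ).card : ℝ) < (n : ℝ) := by linarith
    exact_mod_cast this
  -- pointwise lower bound
  have pointwise : ∀ σ : Fin k → Equiv.Perm (Fin n),
      (k : ℝ) * ((Aset σ t ℓ).card : ℝ)
        - (∑ j : Fin k, ((X σ j ∩ Bset σ t ℓ).card : ℝ))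
        - (1/2) * (∑ i : Fin k, ∑ i' : Fin k,
            (if i = i' then (0:ℝ) else ((X σ i ∩ X σ i').card : ℝ)))
      ≤ ((Aset σ t (ℓ+1)).card : ℝ) := by
    intro σ
    have hsub : Finset.univ.biUnion (X σ) \ Bset σ t ℓ ⊆ Aset σ t (ℓ+1) := by
      intro x hx
      rcases Finset.mem_sdiff.1 hx with ⟨hx1, hx2⟩
      rcases Finset.mem_biUnion.1 hx1 with ⟨j, -, hxj⟩
      rcases Finset.mem_image.1 hxj with ⟨v, hv, rfl⟩
      have hvS : v ∈ Sset σ t ℓ := Aset_subset_Sset σ t ℓ hv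
      have : (σ j)⁻¹ v ∈ Sset σ t (ℓ+1) := by
        show (σ j)⁻¹ v ∈ Finset.univ.biUnion fun i => (Sset σ t ℓ).image fun w => (σ i)⁻¹ w
        exact Finset.mem_biUnion.2 ⟨j, Finset.mem_univ _, Finset.mem_image.2 ⟨v, hvS, rfl⟩⟩
      show (σ j)⁻¹ v ∈ Sset σ t (ℓ+1) \ Bset σ t ℓ
      exact Finset.mem_sdiff.2 ⟨this, hx2⟩
    have hXcard : ∀ j : Fin k, ((X σ j).card : ℝ) = ((Aset σ t ℓ).card : ℝ) := by
      intro j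
      simp only [hX]
      rw [Finset.card_image_of_injective _ (Equiv.injective _)]
    have hul := union_lower (X σ) (Bset σ t ℓ)
    have hcard : ((Finset.univ.biUnion (X σ) \ Bset σ t ℓ).card : ℝ)
        ≤ ((Aset σ t (ℓ+1)).card : ℝ) := by
      exact_mod_cast Finset.card_le_card hsub
    have hsum : ∑ j : Fin k, ((X σ j).card : ℝ) = (k : ℝ) * ((Aset σ t ℓ).card : ℝ) := by
      rw [Finset.sum_congr rfl fun j _ => hXcard j, Finset.sum_const]
      simp [mul_comm]
    rw [hsum] at hul
    linarith

  -- global bounds via the core counting lemma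
  have coreB : ∀ j : Fin k,
      (∑ σ : Fin k → Equiv.Perm (Fin n), ((X σ j ∩ Bset σ t ℓ).card : ℝ))
        ≤ (∑ σ : Fin k → Equiv.Perm (Fin n),
            ((Aset σ t ℓ).card : ℝ) * ((Bset σ t ℓ).card : ℝ)) / m₀ := by
    intro j
    have hcore := core j (fun σ => Aset σ t ℓ) (fun σ => Bset σ t ℓ) (fun σ => Prev σ t ℓ)
      (fun σ => Aset_disj_Prev σ t ℓ)
      (fun σ π hπ => Aset_update σ t j π ℓ hπ)
      (fun σ π hπ => Bset_update σ t j π ℓ hπ ℓ le_rfl)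
      (fun σ π hπ => Prev_update σ t j π ℓ hπ)
      hPn
    rw [le_div_iff₀ hm₀pos]
    calc (∑ σ : Fin k → Equiv.Perm (Fin n), ((X σ j ∩ Bset σ t ℓ).card : ℝ)) * m₀
        = ∑ σ : Fin k → Equiv.Perm (Fin n), m₀ * ((X σ j ∩ Bset σ t ℓ).card : ℝ) := by
          rw [Finset.sum_mul]
          exact Finset.sum_congr rfl fun σ _ => mul_comm _ _
      _ ≤ ∑ σ : Fin k → Equiv.Perm (Fin n),
            ((n : ℝ) - ((Prev σ t ℓ).card : ℝ)) * ((X σ j ∩ Bset σ t ℓ).card : ℝ) := by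
          refine Finset.sum_le_sum fun σ _ => ?_
          exact mul_le_mul_of_nonneg_right (hm₀ σ) (by positivity)
      _ ≤ ∑ σ : Fin k → Equiv.Perm (Fin n),
            ((Aset σ t ℓ).card : ℝ) * ((Bset σ t ℓ).card : ℝ) := hcore
  have coreP : ∀ i i' : Fin k, i ≠ i' →
      (∑ σ : Fin k → Equiv.Perm (Fin n), ((X σ i ∩ X σ i').card : ℝ))
        ≤ (∑ σ : Fin k → Equiv.Perm (Fin n),
            ((Aset σ t ℓ).card : ℝ) * ((Aset σ t ℓ).card : ℝ)) / m₀ := by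
    intro i i' hne
    have hcore := core i (fun σ => Aset σ t ℓ)
      (fun σ => (Aset σ t ℓ).image ⇑(σ i')⁻¹) (fun σ => Prev σ t ℓ)
      (fun σ => Aset_disj_Prev σ t ℓ)
      (fun σ π hπ => Aset_update σ t i π ℓ hπ)
      (fun σ π hπ => by
        show (Aset (Function.update σ i (σ i * π)) t ℓ).image
              ⇑((Function.update σ i (σ i * π)) i')⁻¹
            = (Aset σ t ℓ).image ⇑(σ i')⁻¹
        rw [Function.update_of_ne (Ne.symm hne), Aset_update σ t i π ℓ hπ])
      (fun σ π hπ => Prev_update σ t i π ℓ hπ)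
      hPn
    have hrhs : ∑ σ : Fin k → Equiv.Perm (Fin n),
          ((Aset σ t ℓ).card : ℝ) * (((Aset σ t ℓ).image ⇑(σ i')⁻¹).card : ℝ)
        = ∑ σ : Fin k → Equiv.Perm (Fin n),
          ((Aset σ t ℓ).card : ℝ) * ((Aset σ t ℓ).card : ℝ) := by
      refine Finset.sum_congr rfl fun σ _ => ?_
      rw [Finset.card_image_of_injective _ (Equiv.injective _)]
    rw [hrhs] at hcore
    rw [le_div_iff₀ hm₀pos]
    calc (∑ σ : Fin k → Equiv.Perm (Fin n), ((X σ i ∩ X σ i').card : ℝ)) * m₀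
        = ∑ σ : Fin k → Equiv.Perm (Fin n), m₀ * ((X σ i ∩ X σ i').card : ℝ) := by
          rw [Finset.sum_mul]
          exact Finset.sum_congr rfl fun σ _ => mul_comm _ _
      _ ≤ ∑ σ : Fin k → Equiv.Perm (Fin n),
            ((n : ℝ) - ((Prev σ t ℓ).card : ℝ)) * ((X σ i ∩ X σ i').card : ℝ) := by
          refine Finset.sum_le_sum fun σ _ => ?_
          exact mul_le_mul_of_nonneg_right (hm₀ σ) (by positivity)
      _ ≤ _ := hcore
  -- assemble
  set SA := ∑ σ : Fin k → Equiv.Perm (Fin n), ((Aset σ t ℓ).card : ℝ) with hSA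
  set SAB := ∑ σ : Fin k → Equiv.Perm (Fin n),
      ((Aset σ t ℓ).card : ℝ) * ((Bset σ t ℓ).card : ℝ) with hSAB
  set SAA := ∑ σ : Fin k → Equiv.Perm (Fin n),
      ((Aset σ t ℓ).card : ℝ) * ((Aset σ t ℓ).card : ℝ) with hSAA
  have hsumall : (∑ σ : Fin k → Equiv.Perm (Fin n), ((k : ℝ) * ((Aset σ t ℓ).card : ℝ)
        - (∑ j : Fin k, ((X σ j ∩ Bset σ t ℓ).card : ℝ))
        - (1/2) * (∑ i : Fin k, ∑ i' : Fin k,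
            (if i = i' then (0:ℝ) else ((X σ i ∩ X σ i').card : ℝ)))))
      ≤ ∑ σ : Fin k → Equiv.Perm (Fin n), ((Aset σ t (ℓ+1)).card : ℝ) :=
    Finset.sum_le_sum fun σ _ => pointwise σ
  rw [Finset.sum_sub_distrib, Finset.sum_sub_distrib] at hsumall
  have e1 : (∑ σ : Fin k → Equiv.Perm (Fin n), (k : ℝ) * ((Aset σ t ℓ).card : ℝ))
      = (k : ℝ) * SA := by rw [hSA, Finset.mul_sum]
  have e2 : (∑ σ : Fin k → Equiv.Perm (Fin n),
        ∑ j : Fin k, ((X σ j ∩ Bset σ t ℓ).card : ℝ)) ≤ (k : ℝ) * (SAB / m₀) := by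
    rw [Finset.sum_comm]
    calc (∑ j : Fin k, ∑ σ : Fin k → Equiv.Perm (Fin n), ((X σ j ∩ Bset σ t ℓ).card : ℝ))
        ≤ ∑ _j : Fin k, SAB / m₀ := Finset.sum_le_sum fun j _ => coreB j
      _ = (k : ℝ) * (SAB / m₀) := by
          rw [Finset.sum_const]
          simp [mul_comm]
  have e3 : (∑ σ : Fin k → Equiv.Perm (Fin n), ∑ i : Fin k, ∑ i' : Fin k,
        (if i = i' then (0:ℝ) else ((X σ i ∩ X σ i').card : ℝ)))
      ≤ (k : ℝ) * ((k : ℝ) - 1) * (SAA / m₀) := by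
    rw [Finset.sum_comm]
    have swap2 : ∀ i : Fin k, (∑ σ : Fin k → Equiv.Perm (Fin n), ∑ i' : Fin k,
          (if i = i' then (0:ℝ) else ((X σ i ∩ X σ i').card : ℝ)))
        = ∑ i' : Fin k, ∑ σ : Fin k → Equiv.Perm (Fin n),
          (if i = i' then (0:ℝ) else ((X σ i ∩ X σ i').card : ℝ)) := fun i => Finset.sum_comm
    rw [Finset.sum_congr rfl fun i _ => swap2 i]
    have inner : ∀ i i' : Fin k, (∑ σ : Fin k → Equiv.Perm (Fin n),
          (if i = i' then (0:ℝ) else ((X σ i ∩ X σ i').card : ℝ)))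
        ≤ (if i = i' then (0:ℝ) else SAA / m₀) := by
      intro i i'
      split_ifs with h
      · simp
      · exact coreP i i' h
    calc (∑ i : Fin k, ∑ i' : Fin k, ∑ σ : Fin k → Equiv.Perm (Fin n),
          (if i = i' then (0:ℝ) else ((X σ i ∩ X σ i').card : ℝ)))
        ≤ ∑ i : Fin k, ∑ i' : Fin k, (if i = i' then (0:ℝ) else SAA / m₀) :=
          Finset.sum_le_sum fun i _ => Finset.sum_le_sum fun i' _ => inner i i'
      _ = ∑ _i : Fin k, (((k : ℝ) - 1) * (SAA / m₀)) := by
          refine Finset.sum_congr rfl fun i _ => ?_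
          have : (∑ i' : Fin k, (if i = i' then (0:ℝ) else SAA / m₀))
              = (∑ _i' : Fin k, SAA / m₀) - ∑ i' : Fin k, (if i = i' then SAA / m₀ else 0) := by
            rw [← Finset.sum_sub_distrib]
            refine Finset.sum_congr rfl fun i' _ => ?_
            split_ifs <;> ring
          rw [this, Finset.sum_ite_eq]
          simp only [Finset.mem_univ, if_true, Finset.sum_const, Finset.card_univ,
            Fintype.card_fin, nsmul_eq_mul]
          ring
      _ = (k : ℝ) * ((k : ℝ) - 1) * (SAA / m₀) := by
          rw [Finset.sum_const]
          simp [mul_comm, mul_assoc]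
  have hdiv : ((k : ℝ) * SAB + ((k : ℝ) * ((k : ℝ) - 1) / 2) * SAA) / m₀
      = (k : ℝ) * (SAB / m₀) + (1/2) * ((k : ℝ) * ((k : ℝ) - 1) * (SAA / m₀)) := by
    field_simp
  rw [e1] at hsumall
  rw [hdiv]
  have hhalf : (∑ σ : Fin k → Equiv.Perm (Fin n), (1/2) * (∑ i : Fin k, ∑ i' : Fin k,
        (if i = i' then (0:ℝ) else ((X σ i ∩ X σ i').card : ℝ))))
      = (1/2) * ∑ σ : Fin k → Equiv.Perm (Fin n), (∑ i : Fin k, ∑ i' : Fin k,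
        (if i = i' then (0:ℝ) else ((X σ i ∩ X σ i').card : ℝ))) := by
    rw [Finset.mul_sum]
  rw [hhalf] at hsumall
  linarith [e2, e3, hsumall]

lemma keyid_aux (K m₀ : ℝ) (d : ℕ) (h1 : K - 1 ≠ 0) (h2 : m₀ ≠ 0) :
    K * (K^d - ((K^2+1)/(2*(K-1)^2*m₀)) * K^d * (K^d - 1))
      - (K * (K^d * (K * K^d / (K-1))) + (K * (K - 1) / 2) * (K^d * K^d)) / m₀
      = K^(d+1) - ((K^2+1)/(2*(K-1)^2*m₀)) * K^(d+1) * (K^(d+1) - 1) := by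
  field_simp
  ring

end Stmt4Aux

open Stmt4Aux

set_option maxHeartbeats 2000000

/-- For independent uniform permutations `σ_1,…,σ_k` of `[n]` with `k^L ≤ (k−1)/(k+4)·n`,
the expected number of vertices first seen at depth `ℓ` satisfies `E[|A_ℓ|] ≥ k^ℓ/2` for
every `ℓ ≤ L`. -/
theorem stmt4 (n k L : ℕ) (hn : 2 ≤ n) (hk : 2 ≤ k)
    (hkL : (k : ℝ) ^ L ≤ ((k : ℝ) - 1) / ((k : ℝ) + 4) * n) (t : Fin n) :
    ∀ ℓ ≤ L,
      (k : ℝ) ^ ℓ / 2 ≤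
        (∑ σ : Fin k → Equiv.Perm (Fin n), ((Aset σ t ℓ).card : ℝ)) /
          (Fintype.card (Fin k → Equiv.Perm (Fin n)) : ℝ) := by
  classical
  intro ℓ hℓ
  set K : ℝ := (k : ℝ) with hKdef
  have hK2 : (2:ℝ) ≤ K := by rw [hKdef]; exact_mod_cast hk
  have hn2 : (2:ℝ) ≤ (n:ℝ) := by exact_mod_cast hn
  have hK1 : K ≠ 1 := by linarith
  have hKpos : (0:ℝ) < K := by linarith
  have hK1' : (0:ℝ) < K - 1 := by linarith
  have hK4 : (0:ℝ) < K + 4 := by linarith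
  have hKK : (0:ℝ) < K * (K + 4) := by positivity
  have hKK12 : (12:ℝ) ≤ K * (K + 4) := by nlinarith
  set p₀ : ℝ := (K ^ (L-1) - 1)/(K-1) with hp₀def
  set m₀ : ℝ := (n:ℝ) - p₀ with hm₀def
  have hrn : K ^ L ≤ (K-1)/(K+4) * n := hkL
  have hrnA : K ^ L * (K+4) ≤ (K-1) * n := by
    have hc : ((K-1)/(K+4) * n) * (K+4) = (K-1) * n := by field_simp
    calc K ^ L * (K+4) ≤ ((K-1)/(K+4) * n) * (K+4) :=
          mul_le_mul_of_nonneg_right hrn hK4.le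
      _ = (K-1) * n := hc
  have hp₀nn : (0:ℝ) ≤ p₀ := by
    rw [hp₀def]
    apply div_nonneg _ hK1'.le
    have : (1:ℝ) ≤ K ^ (L-1) := one_le_pow₀ (by linarith)
    linarith
  have hp₀' : p₀ * (K*(K+4)) ≤ n := by
    rcases Nat.eq_zero_or_pos L with hL0 | hLpos
    · have : p₀ = 0 := by rw [hp₀def, hL0]; norm_num
      rw [this]
      linarith
    · have hpow : K ^ (L-1) * K = K ^ L := by
        rw [← pow_succ]
        congr 1
        omega
      have hrn'' : K ^ (L-1) * (K*(K+4)) ≤ (K-1) * n := by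
        calc K ^ (L-1) * (K*(K+4)) = (K ^ (L-1) * K) * (K+4) := by ring
          _ = K ^ L * (K+4) := by rw [hpow]
          _ ≤ (K-1) * n := hrnA
      rw [hp₀def, div_mul_eq_mul_div, div_le_iff₀ hK1']
      nlinarith [hrn'', hKK]
  have hm₀pos : (0:ℝ) < m₀ := by
    rw [hm₀def]
    nlinarith [hp₀', hKK12, hn2, hp₀nn]
  have hm₀low : (n:ℝ) * (K^2 + 4*K - 1) ≤ K*(K+4) * m₀ := by
    rw [hm₀def]
    nlinarith [hp₀']
  set E : ℝ := (K^2+1)/(2*(K-1)^2*m₀) with hEdef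
  obtain ⟨N, hNdef⟩ : ∃ N : ℝ, ((Fintype.card (Fin k → Equiv.Perm (Fin n)) : ℕ) : ℝ) = N :=
    ⟨_, rfl⟩
  rw [hNdef]
  have hN : (0:ℝ) < N := by
    rw [← hNdef]
    exact_mod_cast Fintype.card_pos
  have hNcard : ∀ (M : ℝ), (∑ _σ : Fin k → Equiv.Perm (Fin n), M) = N * M := by
    intro M
    rw [Finset.sum_const, Finset.card_univ, nsmul_eq_mul, hNdef]
  have main : ∀ d, d ≤ L →
      N * (K^d - E * K^d * (K^d - 1)) ≤
        ∑ σ : Fin k → Equiv.Perm (Fin n), ((Aset σ t d).card : ℝ) := by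
    intro d
    induction d with
    | zero =>
      intro _
      have h0 : (∑ σ : Fin k → Equiv.Perm (Fin n), ((Aset σ t 0).card : ℝ)) = N := by
        calc (∑ σ : Fin k → Equiv.Perm (Fin n), ((Aset σ t 0).card : ℝ))
            = ∑ _σ : Fin k → Equiv.Perm (Fin n), (1:ℝ) := by
              refine Finset.sum_congr rfl fun σ _ => ?_
              rw [card_Aset_zero]
              norm_num
          _ = N * 1 := hNcard 1
          _ = N := by ring
      rw [h0]
      simp
    | succ d ih =>
      intro hd1
      have hdL : d ≤ L := by omega
      have ihd := ih hdL
      -- the step hypothesis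
      have hm : ∀ σ : Fin k → Equiv.Perm (Fin n),
          m₀ ≤ (n:ℝ) - ((Prev σ t d).card : ℝ) := by
        intro σ
        have h1 : ((Prev σ t d).card : ℝ) ≤ ∑ h ∈ Finset.range d, K ^ h := by
          have hnat := card_Prev_le σ t d
          calc ((Prev σ t d).card : ℝ)
              ≤ ((∑ h ∈ Finset.range d, k ^ h : ℕ) : ℝ) := by exact_mod_cast hnat
            _ = ∑ h ∈ Finset.range d, K ^ h := by push_cast; rfl
        have h2 : (∑ h ∈ Finset.range d, K ^ h) = (K^d - 1)/(K-1) := geom_sum_eq hK1 d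
        have h3 : K^d ≤ K^(L-1) := by
          apply pow_le_pow_right₀ (by linarith)
          omega
        have h4 : (K^d - 1)/(K-1) ≤ p₀ := by
          rw [hp₀def]
          gcongr
        rw [hm₀def]
        rw [h2] at h1
        linarith
      have hstep := step t d m₀ hm₀pos hm
      -- deterministic bounds
      have hAb : ∀ σ : Fin k → Equiv.Perm (Fin n), ((Aset σ t d).card : ℝ) ≤ K^d := by
        intro σ
        have := card_Aset_le σ t d
        calc ((Aset σ t d).card : ℝ) ≤ ((k^d : ℕ) : ℝ) := by exact_mod_cast this
          _ = K^d := by push_cast; rfl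
      have hAnn : ∀ σ : Fin k → Equiv.Perm (Fin n), (0:ℝ) ≤ ((Aset σ t d).card : ℝ) :=
        fun σ => by positivity
      have hBb : ∀ σ : Fin k → Equiv.Perm (Fin n),
          ((Bset σ t d).card : ℝ) ≤ K * K^d / (K-1) := by
        intro σ
        have hnat := card_Bset_le σ t d
        have h1 : ((Bset σ t d).card : ℝ) ≤ ∑ h ∈ Finset.range (d+1), K ^ h := by
          calc ((Bset σ t d).card : ℝ)
              ≤ ((∑ h ∈ Finset.range (d+1), k ^ h : ℕ) : ℝ) := by exact_mod_cast hnat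
            _ = ∑ h ∈ Finset.range (d+1), K ^ h := by push_cast; rfl
        have h2 : (∑ h ∈ Finset.range (d+1), K ^ h) = (K^(d+1) - 1)/(K-1) :=
          geom_sum_eq hK1 (d+1)
        have hKk : K * K^d = K^(d+1) := by rw [pow_succ]; ring
        have h3 : (K^(d+1) - 1)/(K-1) ≤ K * K^d / (K-1) := by
          rw [hKk]
          gcongr
          · linarith
        linarith [h1, h2 ▸ h1, h3]
      -- sum bounds
      have hSAB : (∑ σ : Fin k → Equiv.Perm (Fin n),
            ((Aset σ t d).card : ℝ) * ((Bset σ t d).card : ℝ))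
          ≤ N * (K^d * (K * K^d / (K-1))) := by
        calc (∑ σ : Fin k → Equiv.Perm (Fin n),
              ((Aset σ t d).card : ℝ) * ((Bset σ t d).card : ℝ))
            ≤ ∑ _σ : Fin k → Equiv.Perm (Fin n), K^d * (K * K^d / (K-1)) := by
              refine Finset.sum_le_sum fun σ _ => ?_
              have hBnn : (0:ℝ) ≤ ((Bset σ t d).card : ℝ) := by positivity
              exact mul_le_mul (hAb σ) (hBb σ) hBnn (by positivity)
          _ = N * (K^d * (K * K^d / (K-1))) := hNcard _
      have hSAA : (∑ σ : Fin k → Equiv.Perm (Fin n),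
            ((Aset σ t d).card : ℝ) * ((Aset σ t d).card : ℝ))
          ≤ N * (K^d * K^d) := by
        calc (∑ σ : Fin k → Equiv.Perm (Fin n),
              ((Aset σ t d).card : ℝ) * ((Aset σ t d).card : ℝ))
            ≤ ∑ _σ : Fin k → Equiv.Perm (Fin n), K^d * K^d := by
              refine Finset.sum_le_sum fun σ _ => ?_
              exact mul_le_mul (hAb σ) (hAb σ) (hAnn σ) (by positivity)
          _ = N * (K^d * K^d) := hNcard _
      -- error comparison
      have herr : (K * (∑ σ : Fin k → Equiv.Perm (Fin n),
              ((Aset σ t d).card : ℝ) * ((Bset σ t d).card : ℝ))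
            + (K * (K - 1) / 2) * (∑ σ : Fin k → Equiv.Perm (Fin n),
              ((Aset σ t d).card : ℝ) * ((Aset σ t d).card : ℝ)))
          ≤ N * (K * (K^d * (K * K^d / (K-1))) + (K * (K - 1) / 2) * (K^d * K^d)) := by
        have c1 : (0:ℝ) ≤ K := hKpos.le
        have c2 : (0:ℝ) ≤ K * (K - 1) / 2 := by positivity
        have t1 := mul_le_mul_of_nonneg_left hSAB c1
        have t2 := mul_le_mul_of_nonneg_left hSAA c2
        linarith [t1, t2]
      -- the key algebraic identity
      have keyid : K * (K^d - E * K^d * (K^d - 1))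
            - (K * (K^d * (K * K^d / (K-1))) + (K * (K - 1) / 2) * (K^d * K^d)) / m₀
          = K^(d+1) - E * K^(d+1) * (K^(d+1) - 1) := by
        rw [hEdef]
        exact keyid_aux K m₀ d (ne_of_gt hK1') (ne_of_gt hm₀pos)
      -- combine
      have hdivle : (K * (∑ σ : Fin k → Equiv.Perm (Fin n),
              ((Aset σ t d).card : ℝ) * ((Bset σ t d).card : ℝ))
            + (K * (K - 1) / 2) * (∑ σ : Fin k → Equiv.Perm (Fin n),
              ((Aset σ t d).card : ℝ) * ((Aset σ t d).card : ℝ))) / m₀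
          ≤ N * (K * (K^d * (K * K^d / (K-1))) + (K * (K - 1) / 2) * (K^d * K^d)) / m₀ := by
        exact (div_le_div_iff_of_pos_right hm₀pos).2 herr
      calc N * (K^(d+1) - E * K^(d+1) * (K^(d+1) - 1))
          = K * (N * (K^d - E * K^d * (K^d - 1)))
            - N * (K * (K^d * (K * K^d / (K-1))) + (K * (K - 1) / 2) * (K^d * K^d)) / m₀ := by
            rw [← keyid]
            ring
        _ ≤ K * (∑ σ : Fin k → Equiv.Perm (Fin n), ((Aset σ t d).card : ℝ))
            - (K * (∑ σ : Fin k → Equiv.Perm (Fin n),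
                ((Aset σ t d).card : ℝ) * ((Bset σ t d).card : ℝ))
              + (K * (K - 1) / 2) * (∑ σ : Fin k → Equiv.Perm (Fin n),
                ((Aset σ t d).card : ℝ) * ((Aset σ t d).card : ℝ))) / m₀ := by
            have := mul_le_mul_of_nonneg_left ihd hKpos.le
            linarith [hdivle]
        _ ≤ ∑ σ : Fin k → Equiv.Perm (Fin n), ((Aset σ t (d+1)).card : ℝ) := hstep
  -- conclusion from main
  have hmain := main ℓ hℓ
  have hE2 : E * (K^ℓ - 1) ≤ 1/2 := by
    have h5 : K^ℓ ≤ K^L := pow_le_pow_right₀ (by linarith) hℓ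
    have h6 : K*(K^2+1) ≤ (K-1)*(K^2+4*K-1) := by nlinarith
    have hden : (0:ℝ) < 2*(K-1)^2*m₀ := by positivity
    rw [hEdef, div_mul_eq_mul_div, div_le_iff₀ hden]
    -- goal : (K^2+1) * (K^ℓ - 1) ≤ 1/2 * (2*(K-1)^2*m₀)
    have tA : (K^2+1) * (K^ℓ - 1) * (K*(K+4)) ≤ (K^2+1) * K^L * (K*(K+4)) := by
      have hx : (K^ℓ - 1) ≤ K^L := by linarith
      exact mul_le_mul_of_nonneg_right
        (mul_le_mul_of_nonneg_left hx (by positivity)) hKK.le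
    have tB : (K^2+1) * K^L * (K*(K+4)) ≤ K * ((K^2+1) * ((K-1) * n)) := by
      have h7 : K^L * (K+4) ≤ (K-1) * n := hrnA
      calc (K^2+1) * K^L * (K*(K+4)) = ((K^2+1)*K) * (K^L*(K+4)) := by ring
        _ ≤ ((K^2+1)*K) * ((K-1)*n) :=
            mul_le_mul_of_nonneg_left h7 (by positivity)
        _ = K * ((K^2+1)*((K-1)*n)) := by ring
    have tC : K * ((K^2+1) * ((K-1) * n)) ≤ ((K-1)*(K^2+4*K-1)) * ((K-1) * n) := by
      have hnn : (0:ℝ) ≤ (K-1) * n := by positivity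
      calc K * ((K^2+1) * ((K-1) * n)) = (K*(K^2+1)) * ((K-1)*n) := by ring
        _ ≤ ((K-1)*(K^2+4*K-1)) * ((K-1)*n) := mul_le_mul_of_nonneg_right h6 hnn
    have tD : ((K-1)*(K^2+4*K-1)) * ((K-1) * n) ≤ (K-1)^2 * (K*(K+4) * m₀) := by
      have h8 : (0:ℝ) ≤ (K-1)^2 := sq_nonneg _
      calc ((K-1)*(K^2+4*K-1)) * ((K-1) * n) = (K-1)^2 * ((n:ℝ)*(K^2+4*K-1)) := by ring
        _ ≤ (K-1)^2 * (K*(K+4) * m₀) := by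
            refine mul_le_mul_of_nonneg_left ?_ h8
            linarith [hm₀low]
    have chain : (K^2+1) * (K^ℓ - 1) * (K*(K+4)) ≤ ((K-1)^2 * m₀) * (K*(K+4)) := by
      have : (K-1)^2 * (K*(K+4) * m₀) = ((K-1)^2 * m₀) * (K*(K+4)) := by ring
      linarith [tA, tB, tC, tD]
    have hfin := le_of_mul_le_mul_right chain hKK
    linear_combination hfin
  rw [le_div_iff₀ hN]
  have hKl : (0:ℝ) < K^ℓ := pow_pos hKpos ℓ
  have hprod : (0:ℝ) ≤ N * (K^ℓ * (1/2 - E*(K^ℓ-1))) :=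
    mul_nonneg hN.le (mul_nonneg hKl.le (by linarith))
  nlinarith [hmain, hprod]
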